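/- arXiv:2506.14267 — 3 statements merged into one kernel-verified Lean document; each statement's English description precedes it below -/
import Mathlib

section
/- Let (x₁, z₁) and (x₂, z₂) be two strong solutions of the closed-loop inclusions ẋ ∈ A(x,z), ż ∈ r - g(x,z) - N_K(z). Then almost everywhere (1/2)(d/dt){‖x₁ - x₂‖² + ‖z₁ - z₂‖²} ≤ -⟨u₁ - u₂, g(x₁,z₁) - g(x₂,z₂)⟩ + ⟨z₁ - z₂, g(x₁,z₁) - g(x₂,z₂)⟩ with z_i = u_i, i.e., (1/2)(d/dt){‖x₁ - x₂‖² + ‖z₁ - z₂‖²} + h(x₁,z₁; x₂,z₂) ≤ 0, where h is the internal dissipation function. -/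
open MeasureTheory Set

/-- Normal cone to `K` at `z`. -/
def normalCone {Y : Type*} [NormedAddCommGroup Y] [InnerProductSpace ℝ Y]
    (K : Set Y) (z : Y) : Set Y :=
  {w : Y | z ∈ K ∧ ∀ y ∈ K, 0 ≤ (inner ℝ w (z - y) : ℝ)}

/-- Closed-loop incremental energy inequality. For two strong
solutions `(x₁,z₁)`, `(x₂,z₂)` of the closed loop `ẋ ∈ A(x,z)`,
`ż ∈ r - g(x,z) - N_K(z)` of an incrementally impedance passive system, one has a.e.
`(1/2)(d/dt){‖x₁-x₂‖² + ‖z₁-z₂‖²} + h(x₁,z₁;x₂,z₂) ≤ 0`, where the internal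
dissipation is `h = ⟨z₁-z₂, g(x₁,z₁)-g(x₂,z₂)⟩ - (1/2)(d/dt)‖x₁-x₂‖²`. -/
theorem stmt5
    {X Y : Type*} [NormedAddCommGroup X] [InnerProductSpace ℝ X]
    [NormedAddCommGroup Y] [InnerProductSpace ℝ Y]
    (A : X × Y → Set X) (g : X × Y → Y) (K : Set Y)
    (hne : K.Nonempty) (hcl : IsClosed K) (hconv : Convex ℝ K) (r : Y)
    (x₁ x₂ : ℝ → X) (z₁ z₂ : ℝ → Y)
    (x₁' x₂' : ℝ → X) (z₁' z₂' : ℝ → Y)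
    -- strong solutions of the closed-loop differential inclusions:
    (hK₁ : ∀ t ≥ (0:ℝ), z₁ t ∈ K) (hK₂ : ∀ t ≥ (0:ℝ), z₂ t ∈ K)
    (hx₁ : ∀ᵐ t ∂(volume.restrict (Ioi (0:ℝ))),
      HasDerivAt x₁ (x₁' t) t ∧ x₁' t ∈ A (x₁ t, z₁ t))
    (hx₂ : ∀ᵐ t ∂(volume.restrict (Ioi (0:ℝ))),
      HasDerivAt x₂ (x₂' t) t ∧ x₂' t ∈ A (x₂ t, z₂ t))
    (hz₁ : ∀ᵐ t ∂(volume.restrict (Ioi (0:ℝ))),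
      HasDerivAt z₁ (z₁' t) t ∧
        ∃ w ∈ normalCone K (z₁ t), z₁' t = r - g (x₁ t, z₁ t) - w)
    (hz₂ : ∀ᵐ t ∂(volume.restrict (Ioi (0:ℝ))),
      HasDerivAt z₂ (z₂' t) t ∧
        ∃ w ∈ normalCone K (z₂ t), z₂' t = r - g (x₂ t, z₂ t) - w)
    -- incremental impedance passivity of the open-loop system along these solutions:
    (hpassive : ∀ᵐ t ∂(volume.restrict (Ioi (0:ℝ))),
      ∀ dx : ℝ, HasDerivAt (fun s => ‖x₁ s - x₂ s‖ ^ 2) dx t →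
        (1 / 2) * dx ≤
          (inner ℝ (z₁ t - z₂ t) (g (x₁ t, z₁ t) - g (x₂ t, z₂ t)) : ℝ)) :
    ∀ᵐ t ∂(volume.restrict (Ioi (0:ℝ))),
      ∀ dx dz : ℝ,
        HasDerivAt (fun s => ‖x₁ s - x₂ s‖ ^ 2) dx t →
        HasDerivAt (fun s => ‖z₁ s - z₂ s‖ ^ 2) dz t →
        (1 / 2) * (dx + dz) +
          ((inner ℝ (z₁ t - z₂ t) (g (x₁ t, z₁ t) - g (x₂ t, z₂ t)) : ℝ)
            - (1 / 2) * dx) ≤ 0 := by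
  filter_upwards [hz₁, hz₂] with t h1 h2
  intro dx dz hdx hdz
  obtain ⟨hd1, w₁, hw₁, he₁⟩ := h1
  obtain ⟨hd2, w₂, hw₂, he₂⟩ := h2
  -- derivative of ‖z₁ - z₂‖²
  have hzd : HasDerivAt (fun s => ‖z₁ s - z₂ s‖ ^ 2)
      ((inner ℝ (z₁ t - z₂ t) (z₁' t - z₂' t) : ℝ)
        + (inner ℝ (z₁' t - z₂' t) (z₁ t - z₂ t) : ℝ)) t := by
    have hfun : (fun s => ‖z₁ s - z₂ s‖ ^ 2)
        = fun s => (inner ℝ (z₁ s - z₂ s) (z₁ s - z₂ s) : ℝ) :=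
      funext fun s => (real_inner_self_eq_norm_sq _).symm
    rw [hfun]
    exact (hd1.sub hd2).inner ℝ (hd1.sub hd2)
  have hdzval : dz = (inner ℝ (z₁ t - z₂ t) (z₁' t - z₂' t) : ℝ)
      + (inner ℝ (z₁' t - z₂' t) (z₁ t - z₂ t) : ℝ) := hdz.unique hzd
  have hdiff : z₁' t - z₂' t
      = -(g (x₁ t, z₁ t) - g (x₂ t, z₂ t)) - (w₁ - w₂) := by
    rw [he₁, he₂]; abel
  have hmono : 0 ≤ (inner ℝ (w₁ - w₂) (z₁ t - z₂ t) : ℝ) := by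
    have h1 := hw₁.2 (z₂ t) hw₂.1
    have h2 := hw₂.2 (z₁ t) hw₁.1
    have : z₂ t - z₁ t = -(z₁ t - z₂ t) := by abel
    rw [this, inner_neg_right] at h2
    rw [inner_sub_left]
    linarith
  have hsym : (inner ℝ (z₁' t - z₂' t) (z₁ t - z₂ t) : ℝ)
      = (inner ℝ (z₁ t - z₂ t) (z₁' t - z₂' t) : ℝ) := real_inner_comm _ _
  have hval : (inner ℝ (z₁ t - z₂ t) (z₁' t - z₂' t) : ℝ)
      = -(inner ℝ (z₁ t - z₂ t) (g (x₁ t, z₁ t) - g (x₂ t, z₂ t)) : ℝ)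
        - (inner ℝ (z₁ t - z₂ t) (w₁ - w₂) : ℝ) := by
    rw [hdiff, inner_sub_right, inner_neg_right]
  have hmono' : 0 ≤ (inner ℝ (z₁ t - z₂ t) (w₁ - w₂) : ℝ) := by
    rwa [real_inner_comm]
  rw [hdzval, hsym, hval]
  ring_nf
  nlinarith [hmono']
end

section
/- Under the distinguishability assumption (h(x⋆,u⋆; x†,u†) = 0 for steady-state pairs implies x⋆ = x†) and injectivity of the steady-state map (for each x ∈ C at most one u ∈ K with 0 ∈ A(x,u)), the closed-loop system ẋ ∈ A(x,z), ż ∈ r - g(x,z) - N_K(z) possesses at most one equilibrium. -/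
/-- Under incremental impedance passivity (dissipativity of the
coupling), the distinguishability assumption (vanishing internal dissipation
`h(x⋆,u⋆;x†,u†) = ⟨u⋆-u†, g⋆-g†⟩ = 0` for steady-state pairs forces `x⋆ = x†`)
and injectivity of the steady-state map, the closed-loop system
`ẋ ∈ A(x,z)`, `ż ∈ r - g(x,z) - N_K(z)` possesses at most one equilibrium. -/
theorem stmt6
    {X Y : Type*} [NormedAddCommGroup X] [InnerProductSpace ℝ X]
    [NormedAddCommGroup Y] [InnerProductSpace ℝ Y]
    (A : X × Y → Set X) (g : X × Y → Y) (C : Set X) (K : Set Y)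
    (hCcl : IsClosed C) (hCconv : Convex ℝ C)
    (hKcl : IsClosed K) (hKconv : Convex ℝ K) (r : Y)
    -- incremental impedance passivity (dissipativity of the coupling 𝒜):
    (hdiss : ∀ p₁ p₂ : X × Y, ∀ f₁ ∈ A p₁, ∀ f₂ ∈ A p₂,
      (inner ℝ (f₁ - f₂) (p₁.1 - p₂.1) : ℝ)
        - (inner ℝ (g p₁ - g p₂) (p₁.2 - p₂.2) : ℝ) ≤ 0)
    -- distinguishability of steady states:
    (hdist : ∀ xs xd : X, ∀ us ud : Y, (0:X) ∈ A (xs, us) → (0:X) ∈ A (xd, ud) →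
      (inner ℝ (us - ud) (g (xs, us) - g (xd, ud)) : ℝ) = 0 → xs = xd)
    -- injectivity of the steady-state map: at most one input per steady state:
    (hinj : ∀ x ∈ C, ∀ u₁ ∈ K, ∀ u₂ ∈ K,
      (0:X) ∈ A (x, u₁) → (0:X) ∈ A (x, u₂) → u₁ = u₂) :
    -- at most one closed-loop equilibrium:
    ∀ x₁ ∈ C, ∀ x₂ ∈ C, ∀ u₁ ∈ K, ∀ u₂ ∈ K,
      (0:X) ∈ A (x₁, u₁) → (0:X) ∈ A (x₂, u₂) →
      r - g (x₁, u₁) ∈ normalCone K u₁ → r - g (x₂, u₂) ∈ normalCone K u₂ →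
      x₁ = x₂ ∧ u₁ = u₂ := by
  intro x₁ hx₁ x₂ hx₂ u₁ hu₁ u₂ hu₂ hA₁ hA₂ hN₁ hN₂
  -- dissipativity with f₁ = f₂ = 0 gives ⟨u₁-u₂, g₁-g₂⟩ ≥ 0
  have h1 := hdiss (x₁, u₁) (x₂, u₂) 0 hA₁ 0 hA₂
  simp only [sub_zero, inner_zero_left, zero_sub, neg_nonpos] at h1
  -- normal cone inequalities
  have h2 := hN₁.2 u₂ hu₂
  have h3 := hN₂.2 u₁ hu₁
  have hzero : (inner ℝ (u₁ - u₂) (g (x₁, u₁) - g (x₂, u₂)) : ℝ) = 0 := by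
    have e : (inner ℝ (r - g (x₁, u₁)) (u₁ - u₂) : ℝ)
        + (inner ℝ (r - g (x₂, u₂)) (u₂ - u₁) : ℝ)
        = -(inner ℝ (g (x₁, u₁) - g (x₂, u₂)) (u₁ - u₂) : ℝ) := by
      simp only [inner_sub_left, inner_sub_right]; ring
    rw [real_inner_comm]
    linarith
  have hx : x₁ = x₂ := hdist x₁ x₂ u₁ u₂ hA₁ hA₂ hzero
  subst hx
  exact ⟨rfl, hinj x₁ hx₁ u₁ hu₁ u₂ hu₂ hA₁ hA₂⟩
end

section
/- Let T : E → E' be a monotone, bounded, hemicontinuous map from a separable reflexive Banach space E to its dual, and suppose it is coercive in the sense that ⟨T(w), w⟩/‖w‖ → ∞ as ‖w‖ → ∞. Then T is surjective: for every L ∈ E' there exists w ∈ E with T(w) = L. If additionally T is strictly monotone (⟨T(w₁)-T(w₂), w₁-w₂⟩ > 0 whenever w₁ ≠ w₂), then T is bijective. -/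
open Filter Topology

/-- 1-D: strongly monotone continuous real function is surjective. -/
lemma oneD_surj (g : ℝ → ℝ) {ε : ℝ} (hε : 0 < ε) (hg : Continuous g)
    (hsm : ∀ s t, ε * (s - t)^2 ≤ (g s - g t) * (s - t)) :
    Function.Surjective g := by
  intro y
  set b : ℝ := 1 + |y - g 0| / ε with hb
  have hbpos : 0 < b := by positivity
  have hεb : ε * b = ε + |y - g 0| := by
    rw [hb, mul_add, mul_one, mul_div_assoc', mul_div_cancel_left₀ _ hε.ne']
  have hgb : y ≤ g b := by
    have h := hsm b 0
    simp only [sub_zero] at h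
    have h2 : ε * b ≤ g b - g 0 := by
      have := le_of_mul_le_mul_right (by nlinarith : (ε * b) * b ≤ (g b - g 0) * b) hbpos
      linarith
    nlinarith [abs_nonneg (y - g 0), le_abs_self (y - g 0), neg_abs_le (y - g 0)]
  have hga : g (-b) ≤ y := by
    have h := hsm (-b) 0
    simp only [sub_zero] at h
    have h2 : g (-b) - g 0 ≤ ε * (-b) := by nlinarith
    nlinarith [abs_nonneg (y - g 0), le_abs_self (y - g 0), neg_abs_le (y - g 0)]
  have hab : (-b) ≤ b := by linarith
  obtain ⟨t, _, ht⟩ := intermediate_value_Icc hab hg.continuousOn ⟨hga, hgb⟩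
  exact ⟨t, ht⟩

/-- Strongly monotone continuous maps on ℝⁿ are surjective (Brouwer-free, by
induction on the dimension). -/
lemma strongMono_surj : ∀ (n : ℕ) (F : (Fin n → ℝ) → (Fin n → ℝ)) {ε : ℝ}, 0 < ε →
    Continuous F →
    (∀ x y, ε * ∑ i, (x i - y i)^2 ≤ ∑ i, (F x i - F y i) * (x i - y i)) →
    Function.Surjective F := by
  intro n
  induction n with
  | zero =>
    intro F ε hε _ _ y
    exact ⟨y, Subsingleton.elim _ _⟩
  | succ n ih =>
    intro F ε hε hF hsm y
    set g : (Fin n → ℝ) → ℝ → ℝ := fun x' t => F (Fin.snoc x' t) (Fin.last n) with hgdef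
    have hsnoc_cont : Continuous (fun p : (Fin n → ℝ) × ℝ => (Fin.snoc p.1 p.2 : Fin (n+1) → ℝ)) := by
      apply continuous_pi
      intro i
      refine Fin.lastCases ?_ ?_ i
      · simpa using continuous_snd
      · intro j
        simpa [Function.comp_def] using (continuous_apply j).comp continuous_fst
    have hgmono : ∀ x' s t, ε * (s - t)^2 ≤ (g x' s - g x' t) * (s - t) := by
      intro x' s t
      have h := hsm (Fin.snoc x' s) (Fin.snoc x' t)
      rw [Fin.sum_univ_castSucc, Fin.sum_univ_castSucc] at h
      simp only [Fin.snoc_castSucc, Fin.snoc_last, sub_self] at h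
      simpa using h
    have hgcont : ∀ x', Continuous (g x') := by
      intro x'
      exact (continuous_apply (Fin.last n)).comp
        (hF.comp (hsnoc_cont.comp (Continuous.prodMk_right x')))
    have hτ : ∀ x', ∃ t, g x' t = y (Fin.last n) := fun x' =>
      oneD_surj (g x') hε (hgcont x') (hgmono x') (y (Fin.last n))
    choose τ hτeq using hτ
    have hτcont : Continuous τ := by
      rw [continuous_iff_continuousAt]
      intro x₀
      have key : ∀ x', ε * |τ x' - τ x₀| ≤ |g x' (τ x₀) - g x₀ (τ x₀)| := by
        intro x'
        rcases eq_or_ne (τ x') (τ x₀) with h | h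
        · simp [h, abs_nonneg]
        · have h1 := hgmono x' (τ x') (τ x₀)
          rw [hτeq x', ← hτeq x₀] at h1
          have h2 : (g x₀ (τ x₀) - g x' (τ x₀)) * (τ x' - τ x₀)
              ≤ |g x' (τ x₀) - g x₀ (τ x₀)| * |τ x' - τ x₀| := by
            calc (g x₀ (τ x₀) - g x' (τ x₀)) * (τ x' - τ x₀)
                ≤ |(g x₀ (τ x₀) - g x' (τ x₀)) * (τ x' - τ x₀)| := le_abs_self _
              _ = |g x' (τ x₀) - g x₀ (τ x₀)| * |τ x' - τ x₀| := by
                  rw [abs_mul, abs_sub_comm]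
          have habs : 0 < |τ x' - τ x₀| := abs_pos.2 (sub_ne_zero.2 h)
          nlinarith [sq_abs (τ x' - τ x₀)]
      have hcg : Continuous (fun x' => g x' (τ x₀)) := by
        simp only [hgdef]
        exact (continuous_apply (Fin.last n)).comp
          (hF.comp (hsnoc_cont.comp (continuous_id.prodMk continuous_const)))
      have hbound : Tendsto (fun x' => |τ x' - τ x₀|) (𝓝 x₀) (𝓝 0) := by
        apply squeeze_zero (fun _ => abs_nonneg _)
          (g := fun x' => ε⁻¹ * |g x' (τ x₀) - g x₀ (τ x₀)|)
        · intro x'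
          have := key x'
          rw [← le_div_iff₀' hε] at this
          simpa [div_eq_inv_mul] using this
        · have hc : Continuous (fun x' => ε⁻¹ * |g x' (τ x₀) - g x₀ (τ x₀)|) :=
            continuous_const.mul (hcg.sub continuous_const).abs
          have := hc.tendsto x₀
          simpa using this
      have : Tendsto τ (𝓝 x₀) (𝓝 (τ x₀)) := by
        rw [tendsto_iff_dist_tendsto_zero]
        simpa [Real.dist_eq] using hbound
      exact this
    set H : (Fin n → ℝ) → (Fin n → ℝ) := fun x' i => F (Fin.snoc x' (τ x')) i.castSucc with hHdef
    have hHcont : Continuous H := by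
      apply continuous_pi
      intro i
      exact (continuous_apply i.castSucc).comp
        (hF.comp (hsnoc_cont.comp (continuous_id.prodMk hτcont)))
    have hHsm : ∀ x' y', ε * ∑ i, (x' i - y' i)^2 ≤ ∑ i, (H x' i - H y' i) * (x' i - y' i) := by
      intro x' y'
      have h := hsm (Fin.snoc x' (τ x')) (Fin.snoc y' (τ y'))
      rw [Fin.sum_univ_castSucc, Fin.sum_univ_castSucc] at h
      simp only [Fin.snoc_castSucc, Fin.snoc_last] at h
      have hlast : F (Fin.snoc x' (τ x')) (Fin.last n) - F (Fin.snoc y' (τ y')) (Fin.last n) = 0 := by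
        have h1 : g x' (τ x') = y (Fin.last n) := hτeq x'
        have h2 : g y' (τ y') = y (Fin.last n) := hτeq y'
        simp only [hgdef] at h1 h2
        rw [h1, h2, sub_self]
      rw [hlast, zero_mul, add_zero] at h
      have hsq : 0 ≤ (τ x' - τ y')^2 := sq_nonneg _
      calc ε * ∑ i, (x' i - y' i)^2
          ≤ ε * (∑ i : Fin n, (x' i - y' i)^2 + (τ x' - τ y')^2) := by nlinarith
        _ ≤ ∑ i, (H x' i - H y' i) * (x' i - y' i) := h
    obtain ⟨x', hx'⟩ := ih H hε hHcont hHsm (fun i => y i.castSucc)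
    refine ⟨Fin.snoc x' (τ x'), funext fun i => ?_⟩
    refine Fin.lastCases ?_ ?_ i
    · exact hτeq x'
    · intro j
      exact congrFun hx' j

open Filter Topology NormedSpace

/-- The Galerkin coordinate map is continuous. -/
lemma galerkin_cont {E : Type*} [NormedAddCommGroup E] [NormedSpace ℝ E]
    (T : E → StrongDual ℝ E)
    (hmono : ∀ w₁ w₂ : E, 0 ≤ (T w₁ - T w₂) (w₁ - w₂))
    (hbdd : ∀ s : Set E, Bornology.IsBounded s → Bornology.IsBounded (T '' s))
    (hhemi : ∀ w₁ w₂ : E, Continuous fun t : ℝ => (T (w₁ + t • w₂)) w₂)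
    {n : ℕ} (e : Fin n → E) :
    Continuous fun c : Fin n → ℝ => (fun i => T (∑ j, c j • e j) (e i) : Fin n → ℝ) := by
  classical
  set U : (Fin n → ℝ) →ₗ[ℝ] E := Fintype.linearCombination ℝ e with hU
  have hUapp : ∀ c : Fin n → ℝ, U c = ∑ j, c j • e j := fun c =>
    Fintype.linearCombination_apply ℝ e c
  have hUcont : Continuous U := by
    have : Continuous fun c : Fin n → ℝ => ∑ j, c j • e j :=
      continuous_finset_sum _ fun j _ => (continuous_apply j).smul continuous_const
    simpa [funext hUapp] using this
  have hTU : ∀ (w : E) (z : Fin n → ℝ), T w (U z) = ∑ j, z j * T w (e j) := by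
    intro w z
    rw [hUapp, map_sum]
    simp [smul_eq_mul]
  have hmain : Continuous fun c : Fin n → ℝ => (fun i => T (U c) (e i) : Fin n → ℝ) := by
    rw [continuous_iff_seqContinuous]
    intro c c₀ hc
    apply Filter.tendsto_of_subseq_tendsto
    intro ns hns
    set w : ℕ → E := fun k => U (c (ns k)) with hw
    have hwt : Tendsto w atTop (𝓝 (U c₀)) := (hUcont.tendsto c₀).comp (hc.comp hns)
    have hwbd : Bornology.IsBounded (Set.range w) := Metric.isBounded_range_of_tendsto w hwt
    obtain ⟨B, hB⟩ := isBounded_iff_forall_norm_le.1 (hbdd _ hwbd)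
    have hTB : ∀ k, ‖T (w k)‖ ≤ B := fun k => hB _ ⟨w k, ⟨k, rfl⟩, rfl⟩
    set y : ℕ → (Fin n → ℝ) := fun k i => T (w k) (e i) with hy
    have hymem : ∀ k, y k ∈ Set.pi Set.univ (fun i => Set.Icc (-(B * ‖e i‖)) (B * ‖e i‖)) := by
      intro k
      rw [Set.mem_univ_pi]
      intro i
      have h1 : |T (w k) (e i)| ≤ ‖T (w k)‖ * ‖e i‖ := (T (w k)).le_opNorm (e i)
      have h2 : ‖T (w k)‖ * ‖e i‖ ≤ B * ‖e i‖ :=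
        mul_le_mul_of_nonneg_right (hTB k) (norm_nonneg _)
      exact abs_le.1 (le_trans h1 h2)
    obtain ⟨ξ, _, ms, hms, hξ⟩ :=
      (isCompact_univ_pi fun i => isCompact_Icc).tendsto_subseq hymem
    have hξi : ∀ i, Tendsto (fun k => y (ms k) i) atTop (𝓝 (ξ i)) := by
      intro i
      have := (tendsto_pi_nhds.1 hξ) i
      simpa using this
    have hcms : Tendsto (fun k => c (ns (ms k))) atTop (𝓝 c₀) :=
      (hc.comp hns).comp hms.tendsto_atTop
    have hwms : Tendsto (fun k => w (ms k)) atTop (𝓝 (U c₀)) := hwt.comp hms.tendsto_atTop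
    -- Minty's trick: identify the limit ξ
    have hineq : ∀ d : Fin n → ℝ,
        0 ≤ (∑ j, (c₀ j - d j) * ξ j) - T (U d) (U c₀ - U d) := by
      intro d
      have hA : ∀ k, 0 ≤ T (w (ms k)) (w (ms k) - U d) - T (U d) (w (ms k) - U d) := by
        intro k
        have := hmono (w (ms k)) (U d)
        simpa [ContinuousLinearMap.sub_apply] using this
      have hlim1 : Tendsto (fun k => T (w (ms k)) (w (ms k) - U d)) atTop
          (𝓝 (∑ j, (c₀ j - d j) * ξ j)) := by
        have heq : ∀ k, T (w (ms k)) (w (ms k) - U d)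
            = ∑ j, (c (ns (ms k)) j - d j) * y (ms k) j := by
          intro k
          have : w (ms k) - U d = U (c (ns (ms k)) - d) := by
            rw [map_sub]
          rw [this, hTU]
          rfl
        simp only [heq]
        apply tendsto_finset_sum
        intro j _
        exact (((tendsto_pi_nhds.1 hcms) j).sub_const (d j)).mul (hξi j)
      have hlim2 : Tendsto (fun k => T (U d) (w (ms k) - U d)) atTop
          (𝓝 (T (U d) (U c₀ - U d))) :=
        ((T (U d)).continuous.tendsto _).comp (hwms.sub_const (U d))
      exact ge_of_tendsto' (hlim1.sub hlim2) hA
    have hkey : ∀ z : Fin n → ℝ, ∑ j, z j * ξ j ≤ T (U c₀) (U z) := by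
      intro z
      have hstep : ∀ t : ℝ, 0 < t → ∑ j, z j * ξ j ≤ T (U c₀ + t • U z) (U z) := by
        intro t ht
        have := hineq (c₀ + t • z)
        have h1 : (∑ j, (c₀ j - (c₀ + t • z) j) * ξ j) = -t * ∑ j, z j * ξ j := by
          rw [Finset.mul_sum]
          apply Finset.sum_congr rfl
          intro j _
          simp [Pi.add_apply, Pi.smul_apply, smul_eq_mul]
          ring
        have h2 : U (c₀ + t • z) = U c₀ + t • U z := by rw [map_add, map_smul]
        have h3 : U c₀ - U (c₀ + t • z) = -(t • U z) := by rw [h2]; abel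
        rw [h1, h3] at this
        rw [map_neg, map_smul] at this
        have h4 : 0 ≤ -t * ∑ j, z j * ξ j + t * T (U c₀ + t • U z) (U z) := by
          rw [h2] at this
          simpa [smul_eq_mul] using this
        nlinarith
      have hcont := hhemi (U c₀) (U z)
      have htend : Tendsto (fun t : ℝ => T (U c₀ + t • U z) (U z)) (𝓝[>] 0)
          (𝓝 (T (U c₀) (U z))) := by
        have h0 : T (U c₀ + (0:ℝ) • U z) (U z) = T (U c₀) (U z) := by simp
        have := (hcont.tendsto 0).mono_left (nhdsWithin_le_nhds (s := Set.Ioi (0:ℝ)))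
        rwa [h0] at this
      exact ge_of_tendsto htend
        (eventually_nhdsWithin_of_forall fun t ht => hstep t ht)
    have hξeq : ξ = fun i => T (U c₀) (e i) := by
      funext i
      have hz1 := hkey (Pi.single i 1)
      have hz2 := hkey (-(Pi.single i 1))
      have hU1 : U (Pi.single i 1) = e i := by
        rw [hUapp]
        simp [Pi.single_apply]
      have hs1 : ∑ j, (Pi.single i 1 : Fin n → ℝ) j * ξ j = ξ i := by
        simp [Pi.single_apply]
      have hs2 : ∑ j, (-(Pi.single i 1 : Fin n → ℝ)) j * ξ j = -ξ i := by
        simp [Pi.single_apply]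
      rw [hs1, hU1] at hz1
      rw [hs2, map_neg, hU1, map_neg] at hz2
      linarith
    refine ⟨ms, ?_⟩
    have hfin := hξ
    rw [hξeq] at hfin
    exact hfin
  simpa [funext hUapp] using hmain


/-- Solvability of the Galerkin system. -/
lemma galerkin_solve {E : Type*} [NormedAddCommGroup E] [NormedSpace ℝ E]
    (T : E → StrongDual ℝ E)
    (hmono : ∀ w₁ w₂ : E, 0 ≤ (T w₁ - T w₂) (w₁ - w₂))
    (hbdd : ∀ s : Set E, Bornology.IsBounded s → Bornology.IsBounded (T '' s))
    (hhemi : ∀ w₁ w₂ : E, Continuous fun t : ℝ => (T (w₁ + t • w₂)) w₂)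
    (L : StrongDual ℝ E) (R : ℝ)
    (hcoerc : ∀ w : E, T w w ≤ ‖L‖ * ‖w‖ → ‖w‖ ≤ R)
    {n : ℕ} (e : Fin n → E) (K : ℝ) (hK0 : 0 ≤ K)
    (hK : ∀ c : Fin n → ℝ, ‖c‖ ≤ K * ‖∑ j, c j • e j‖) :
    ∃ w : E, w ∈ Submodule.span ℝ (Set.range e) ∧ ‖w‖ ≤ R ∧ ∀ i, T w (e i) = L (e i) := by
  classical
  set U : (Fin n → ℝ) →ₗ[ℝ] E := Fintype.linearCombination ℝ e with hU
  have hUapp : ∀ c : Fin n → ℝ, U c = ∑ j, c j • e j := fun c =>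
    Fintype.linearCombination_apply ℝ e c
  have hUcont : Continuous U := by
    have : Continuous fun c : Fin n → ℝ => ∑ j, c j • e j :=
      continuous_finset_sum _ fun j _ => (continuous_apply j).smul continuous_const
    simpa [funext hUapp] using this
  have hTU : ∀ (w : E) (z : Fin n → ℝ), T w (U z) = ∑ j, z j * T w (e j) := by
    intro w z
    rw [hUapp, map_sum]
    simp [smul_eq_mul]
  have hLU : ∀ z : Fin n → ℝ, L (U z) = ∑ j, z j * L (e j) := by
    intro z
    rw [hUapp, map_sum]
    simp [smul_eq_mul]
  set G : (Fin n → ℝ) → (Fin n → ℝ) := fun c i => T (U c) (e i) - L (e i) with hG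
  have hGcont : Continuous G := by
    have h1 : Continuous fun c : Fin n → ℝ => (fun i => T (∑ j, c j • e j) (e i) : Fin n → ℝ) :=
      galerkin_cont T hmono hbdd hhemi e
    have h2 : Continuous fun c : Fin n → ℝ => (fun i => T (U c) (e i) : Fin n → ℝ) := by
      simpa [funext hUapp] using h1
    exact h2.sub continuous_const
  have hGmono : ∀ x y : Fin n → ℝ, 0 ≤ ∑ i, (G x i - G y i) * (x i - y i) := by
    intro x y
    have h := hmono (U x) (U y)
    have h2 : (T (U x) - T (U y)) (U x - U y) = ∑ i, (G x i - G y i) * (x i - y i) := by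
      rw [← map_sub U x y, ContinuousLinearMap.sub_apply, hTU, hTU, ← Finset.sum_sub_distrib]
      apply Finset.sum_congr rfl
      intro i _
      simp only [hG, Pi.sub_apply]
      ring
    rw [h2] at h
    exact h
  -- regularized solutions
  have hsol : ∀ k : ℕ, ∃ c : Fin n → ℝ, ∀ i, G c i = -(((k:ℝ)+1)⁻¹ * c i) := by
    intro k
    set ε : ℝ := ((k:ℝ)+1)⁻¹ with hε
    have hεpos : 0 < ε := by positivity
    set Fk : (Fin n → ℝ) → (Fin n → ℝ) := fun c => G c + ε • c with hFk
    have hFkcont : Continuous Fk := hGcont.add (continuous_id.const_smul ε)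
    have hFksm : ∀ x y, ε * ∑ i, (x i - y i)^2 ≤ ∑ i, (Fk x i - Fk y i) * (x i - y i) := by
      intro x y
      have hexp : ∀ i, (Fk x i - Fk y i) * (x i - y i)
          = (G x i - G y i) * (x i - y i) + ε * (x i - y i)^2 := by
        intro i
        simp only [hFk, Pi.add_apply, Pi.smul_apply, smul_eq_mul]
        ring
      rw [Finset.sum_congr rfl fun i _ => hexp i, Finset.sum_add_distrib, ← Finset.mul_sum]
      have := hGmono x y
      linarith
    obtain ⟨c, hc⟩ := strongMono_surj n Fk hεpos hFkcont hFksm 0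
    refine ⟨c, fun i => ?_⟩
    have := congrFun hc i
    simp only [hFk, Pi.add_apply, Pi.smul_apply, smul_eq_mul, Pi.zero_apply] at this
    linarith
  choose cs hcs using hsol
  -- uniform bound
  have hid : ∀ c : Fin n → ℝ, ∑ i, c i * G c i = T (U c) (U c) - L (U c) := by
    intro c
    rw [hTU, hLU, ← Finset.sum_sub_distrib]
    apply Finset.sum_congr rfl
    intro i _
    simp only [hG]
    ring
  have hUb : ∀ k, ‖U (cs k)‖ ≤ R := by
    intro k
    apply hcoerc
    have h1 : ∑ i, cs k i * G (cs k) i = -(((k:ℝ)+1)⁻¹ * ∑ i, (cs k i)^2) := by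
      rw [Finset.mul_sum, ← Finset.sum_neg_distrib]
      apply Finset.sum_congr rfl
      intro i _
      rw [hcs k i]
      ring
    have h2 : T (U (cs k)) (U (cs k)) - L (U (cs k)) ≤ 0 := by
      rw [← hid, h1]
      have : 0 ≤ ∑ i, (cs k i)^2 := Finset.sum_nonneg fun i _ => sq_nonneg _
      have hp : (0:ℝ) < ((k:ℝ)+1)⁻¹ := by positivity
      nlinarith
    have h3 : L (U (cs k)) ≤ ‖L‖ * ‖U (cs k)‖ := by
      calc L (U (cs k)) ≤ |L (U (cs k))| := le_abs_self _
        _ ≤ ‖L‖ * ‖U (cs k)‖ := L.le_opNorm _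
    linarith
  have hcb : ∀ k, ‖cs k‖ ≤ K * R := by
    intro k
    calc ‖cs k‖ ≤ K * ‖U (cs k)‖ := by rw [hUapp] at *; exact hK (cs k)
      _ ≤ K * R := mul_le_mul_of_nonneg_left (hUb k) hK0
  have hKR : 0 ≤ K * R := le_trans (norm_nonneg (cs 0)) (hcb 0)
  -- extract convergent subsequence
  have hmem : ∀ k, cs k ∈ Metric.closedBall (0 : Fin n → ℝ) (K * R) := by
    intro k
    rw [mem_closedBall_zero_iff]
    exact hcb k
  obtain ⟨c₀, _, φ, hφ, hcφ⟩ := (isCompact_closedBall (0 : Fin n → ℝ) (K*R)).tendsto_subseq hmem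
  have hGlim1 : Filter.Tendsto (fun j => G (cs (φ j))) Filter.atTop (𝓝 (G c₀)) :=
    (hGcont.tendsto c₀).comp hcφ
  have hGlim2 : Filter.Tendsto (fun j => G (cs (φ j))) Filter.atTop (𝓝 0) := by
    rw [tendsto_pi_nhds]
    intro i
    have hb : ∀ j, |G (cs (φ j)) i| ≤ ((φ j : ℝ)+1)⁻¹ * (K*R) := by
      intro j
      rw [hcs (φ j) i, abs_neg, abs_mul]
      have h1 : |((φ j : ℝ)+1)⁻¹| = ((φ j : ℝ)+1)⁻¹ := abs_of_pos (by positivity)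
      rw [h1]
      apply mul_le_mul_of_nonneg_left _ (by positivity)
      calc |cs (φ j) i| = ‖cs (φ j) i‖ := rfl
        _ ≤ ‖cs (φ j)‖ := norm_le_pi_norm _ i
        _ ≤ K * R := hcb _
    have hten : Filter.Tendsto (fun j => ((φ j : ℝ)+1)⁻¹ * (K*R)) Filter.atTop (𝓝 0) := by
      have h1 : Filter.Tendsto (fun j => ((φ j : ℝ)+1)) Filter.atTop Filter.atTop :=
        Filter.tendsto_atTop_add_const_right _ 1
          (tendsto_natCast_atTop_atTop.comp hφ.tendsto_atTop)
      have h2 := (tendsto_inv_atTop_zero.comp h1).mul_const (K*R)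
      simpa using h2
    have := squeeze_zero (fun j => abs_nonneg _) hb hten
    rw [show (0:ℝ) = |0| from (abs_zero).symm] at this
    have h3 : Filter.Tendsto (fun j => G (cs (φ j)) i) Filter.atTop (𝓝 0) := by
      rw [tendsto_iff_dist_tendsto_zero]
      simpa [Real.dist_eq] using squeeze_zero (fun j => abs_nonneg _) hb hten
    exact h3
  have hGc₀ : G c₀ = 0 := tendsto_nhds_unique hGlim1 hGlim2
  refine ⟨U c₀, ?_, ?_, ?_⟩
  · rw [hUapp]
    exact (Submodule.mem_span_range_iff_exists_fun ℝ).2 ⟨c₀, rfl⟩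
  · have hUlim : Filter.Tendsto (fun j => U (cs (φ j))) Filter.atTop (𝓝 (U c₀)) :=
      (hUcont.tendsto c₀).comp hcφ
    exact le_of_tendsto (hUlim.norm) (Filter.Eventually.of_forall fun j => hUb _)
  · intro i
    have := congrFun hGc₀ i
    simp only [hG, Pi.zero_apply] at this
    linarith

open Filter Topology NormedSpace

/-- Sequential Banach–Alaoglu for the dual of a separable normed space. -/
lemma seqAlaoglu {X : Type*} [NormedAddCommGroup X] [NormedSpace ℝ X]
    [TopologicalSpace.SeparableSpace X]
    (f : ℕ → StrongDual ℝ X) (C : ℝ) (hf : ∀ n, ‖f n‖ ≤ C) :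
    ∃ (φ : StrongDual ℝ X) (ψ : ℕ → ℕ), StrictMono ψ ∧
      ∀ x, Tendsto (fun k => f (ψ k) x) atTop (𝓝 (φ x)) := by
  have hC : 0 ≤ C := le_trans (norm_nonneg _) (hf 0)
  have : Nonempty X := ⟨0⟩
  obtain ⟨d, hd⟩ := TopologicalSpace.exists_dense_seq X
  set s : Set (ℕ → ℝ) := Set.pi Set.univ (fun i => Set.Icc (-(C * ‖d i‖)) (C * ‖d i‖)) with hs
  have hscompact : IsCompact s := isCompact_univ_pi fun i => isCompact_Icc
  have hmem : ∀ n, (fun i => f n (d i)) ∈ s := by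
    intro n
    rw [hs, Set.mem_univ_pi]
    intro i
    have := (f n).le_opNorm (d i)
    have h2 : ‖f n‖ * ‖d i‖ ≤ C * ‖d i‖ := mul_le_mul_of_nonneg_right (hf n) (norm_nonneg _)
    have h3 : |f n (d i)| ≤ C * ‖d i‖ := le_trans (by simpa using this) h2
    exact abs_le.1 h3
  obtain ⟨a, _, ψ, hψ, ha⟩ := hscompact.tendsto_subseq hmem
  have hconv_d : ∀ i, Tendsto (fun k => f (ψ k) (d i)) atTop (𝓝 (a i)) := by
    intro i
    have := (tendsto_pi_nhds.1 ha) i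
    simpa using this
  have hcauchy : ∀ x : X, CauchySeq (fun k => f (ψ k) x) := by
    intro x
    rw [Metric.cauchySeq_iff]
    intro δ hδ
    obtain ⟨i, hi⟩ : ∃ i, dist x (d i) < δ / (4 * (C + 1)) := by
      have : (0:ℝ) < δ / (4 * (C + 1)) := by positivity
      obtain ⟨i, hi⟩ := (Metric.denseRange_iff.1 hd) x _ this
      exact ⟨i, hi⟩
    obtain ⟨N, hN⟩ := Metric.cauchySeq_iff.1 (hconv_d i).cauchySeq (δ/2) (by positivity)
    refine ⟨N, fun m hm l hl => ?_⟩
    have hterm : ∀ k, |f (ψ k) x - f (ψ k) (d i)| ≤ δ / 4 := by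
      intro k
      have h1 : |f (ψ k) x - f (ψ k) (d i)| = ‖f (ψ k) (x - d i)‖ := by
        rw [map_sub]; simp [Real.norm_eq_abs]
      rw [h1]
      calc ‖f (ψ k) (x - d i)‖ ≤ ‖f (ψ k)‖ * ‖x - d i‖ := (f (ψ k)).le_opNorm _
        _ ≤ C * (δ / (4 * (C + 1))) := by
            apply mul_le_mul (hf _) (le_of_lt ?_) (norm_nonneg _) hC
            simpa [dist_eq_norm] using hi
        _ ≤ δ / 4 := by
            rw [mul_div_assoc', div_le_div_iff₀ (by positivity) (by norm_num)]
            nlinarith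
    have hmid := hN m hm l hl
    rw [Real.dist_eq] at hmid ⊢
    have h4 := hterm m
    have h5 := hterm l
    have htri : |f (ψ m) x - f (ψ l) x| ≤ |f (ψ m) x - f (ψ m) (d i)|
        + |f (ψ m) (d i) - f (ψ l) (d i)| + |f (ψ l) (d i) - f (ψ l) x| := by
      have t1 := abs_sub_le (f (ψ m) x) (f (ψ m) (d i)) (f (ψ l) x)
      have t2 := abs_sub_le (f (ψ m) (d i)) (f (ψ l) (d i)) (f (ψ l) x)
      linarith
    rw [abs_sub_comm (f (ψ l) (d i)) (f (ψ l) x)] at htri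
    linarith
  have hlim : ∀ x : X, ∃ L : ℝ, Tendsto (fun k => f (ψ k) x) atTop (𝓝 L) :=
    fun x => cauchySeq_tendsto_of_complete (hcauchy x)
  choose φ₀ hφ₀ using hlim
  have hadd : ∀ x y, φ₀ (x + y) = φ₀ x + φ₀ y := by
    intro x y
    refine tendsto_nhds_unique ?_ ((hφ₀ x).add (hφ₀ y))
    simpa [map_add] using hφ₀ (x + y)
  have hsmul : ∀ (c : ℝ) x, φ₀ (c • x) = c * φ₀ x := by
    intro c x
    refine tendsto_nhds_unique ?_ ((hφ₀ x).const_mul c)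
    simpa [map_smul, smul_eq_mul] using hφ₀ (c • x)
  have hbound : ∀ x, |φ₀ x| ≤ C * ‖x‖ := by
    intro x
    have : Tendsto (fun k => |f (ψ k) x|) atTop (𝓝 |φ₀ x|) := (hφ₀ x).abs
    refine le_of_tendsto this (Eventually.of_forall fun k => ?_)
    calc |f (ψ k) x| = ‖f (ψ k) x‖ := rfl
      _ ≤ ‖f (ψ k)‖ * ‖x‖ := (f (ψ k)).le_opNorm x
      _ ≤ C * ‖x‖ := mul_le_mul_of_nonneg_right (hf _) (norm_nonneg _)
  set lm : X →ₗ[ℝ] ℝ :=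
    { toFun := φ₀
      map_add' := hadd
      map_smul' := by intro c x; simpa using hsmul c x } with hlm
  refine ⟨LinearMap.mkContinuous lm C (fun x => by rw [Real.norm_eq_abs]; exact hbound x),
    ψ, hψ, ?_⟩
  intro x
  exact hφ₀ x

open Filter Topology NormedSpace TopologicalSpace

/-- A normed space whose dual is separable is itself separable. -/
lemma sep_of_dual_sep (X : Type*) [NormedAddCommGroup X] [NormedSpace ℝ X]
    [SeparableSpace (StrongDual ℝ X)] : SeparableSpace X := by
  have : Nonempty (StrongDual ℝ X) := ⟨0⟩
  obtain ⟨f, hf⟩ := exists_dense_seq (StrongDual ℝ X)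
  -- near-norming vectors
  have hx : ∀ n, ∃ x : X, ‖x‖ ≤ 1 ∧ ‖f n‖ / 2 ≤ f n x := by
    intro n
    rcases eq_or_ne (f n) 0 with h | h
    · exact ⟨0, by simp [h]⟩
    · have hpos : 0 < ‖f n‖ := norm_pos_iff.2 h
      have : ¬ (∀ x, ‖f n x‖ ≤ (‖f n‖ / 2) * ‖x‖) := by
        intro hcon
        have := (f n).opNorm_le_bound (by positivity) hcon
        linarith
      push_neg at this
      obtain ⟨x, hx⟩ := this
      have hxne : x ≠ 0 := by
        intro h0
        rw [h0] at hx
        simp at hx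
      have hxpos : 0 < ‖x‖ := norm_pos_iff.2 hxne
      set y := ‖x‖⁻¹ • x with hy
      have hynorm : ‖y‖ = 1 := by
        rw [hy, norm_smul]
        simp [abs_of_pos (inv_pos.2 hxpos), inv_mul_cancel₀ (ne_of_gt hxpos)]
      have hval : ‖f n‖ / 2 < ‖f n y‖ := by
        rw [hy, map_smul]
        have : ‖f n x‖ / ‖x‖ > ‖f n‖ / 2 := by
          rw [gt_iff_lt, lt_div_iff₀ hxpos]
          exact hx
        simpa [norm_smul, abs_of_pos (inv_pos.2 hxpos), inv_mul_eq_div] using this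
      rcases le_or_gt 0 (f n y) with hsign | hsign
      · exact ⟨y, le_of_eq hynorm, by rw [Real.norm_eq_abs, abs_of_nonneg hsign] at hval; linarith⟩
      · refine ⟨-y, by simp [hynorm], ?_⟩
        rw [map_neg]
        rw [Real.norm_eq_abs, abs_of_neg hsign] at hval
        linarith
  choose x hx1 hx2 using hx
  set M : Submodule ℝ X := Submodule.span ℝ (Set.range x) with hM
  -- M is dense
  have hdense : Dense (M : Set X) := by
    by_contra hnd
    have : ∃ z : X, z ∉ M.topologicalClosure := by
      by_contra hz
      push_neg at hz
      have heq : (M.topologicalClosure : Set X) = Set.univ := Set.eq_univ_of_forall hz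
      rw [M.topologicalClosure_coe] at heq
      exact hnd (by rw [dense_iff_closure_eq, heq])
    obtain ⟨z, hz⟩ := this
    haveI : IsClosed (M.topologicalClosure : Set X) := Submodule.isClosed_topologicalClosure M
    set Q := X ⧸ M.topologicalClosure
    have hzne : (Submodule.Quotient.mk z : Q) ≠ 0 := by
      rw [Ne, Submodule.Quotient.mk_eq_zero]
      exact hz
    obtain ⟨g, hg1, hg2⟩ := exists_dual_vector ℝ (Submodule.Quotient.mk z : Q) (norm_ne_zero_iff.2 hzne)
    -- h = g ∘ mk as a continuous linear functional on X
    set lmh : X →ₗ[ℝ] ℝ := g.toLinearMap.comp (M.topologicalClosure.mkQ) with hlmh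
    have hlmhbound : ∀ xx : X, ‖lmh xx‖ ≤ 1 * ‖xx‖ := by
      intro xx
      calc ‖lmh xx‖ = ‖g (Submodule.Quotient.mk xx)‖ := rfl
        _ ≤ ‖g‖ * ‖(Submodule.Quotient.mk xx : Q)‖ := g.le_opNorm _
        _ ≤ 1 * ‖xx‖ := by
            rw [hg1]
            exact mul_le_mul_of_nonneg_left (Submodule.Quotient.norm_mk_le _ _) zero_le_one
    set h : StrongDual ℝ X := LinearMap.mkContinuous lmh 1 hlmhbound with hh
    have hhM : ∀ xx ∈ M, h xx = 0 := by
      intro xx hxx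
      have : (Submodule.Quotient.mk xx : Q) = 0 := by
        rw [Submodule.Quotient.mk_eq_zero]
        exact Submodule.le_topologicalClosure M hxx
      show g (Submodule.Quotient.mk xx) = 0
      rw [this, map_zero]
    have hhz : h z ≠ 0 := by
      show g (Submodule.Quotient.mk z) ≠ 0
      rw [hg2]
      simpa [norm_pos_iff] using hzne
    have hhne : h ≠ 0 := fun h0 => hhz (by rw [h0]; rfl)
    have hhnorm : 0 < ‖h‖ := norm_pos_iff.2 hhne
    set h' : StrongDual ℝ X := ‖h‖⁻¹ • h with hh'
    have hh'norm : ‖h'‖ = 1 := by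
      rw [hh', norm_smul]
      simp [abs_of_pos (inv_pos.2 hhnorm), inv_mul_cancel₀ (ne_of_gt hhnorm)]
    have hh'M : ∀ xx ∈ M, h' xx = 0 := by
      intro xx hxx
      show ‖h‖⁻¹ • (h xx) = 0
      rw [hhM xx hxx, smul_zero]
    obtain ⟨n, hn⟩ := hf.exists_dist_lt h' (by norm_num : (0:ℝ) < 1/4)
    rw [dist_eq_norm] at hn
    have hfn : 3/4 ≤ ‖f n‖ := by
      have := norm_sub_norm_le h' (f n)
      rw [hh'norm] at this
      linarith
    have hfx : f n (x n) < 1/4 := by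
      have hxM : x n ∈ M := Submodule.subset_span ⟨n, rfl⟩
      have : f n (x n) = (f n - h') (x n) + h' (x n) := by simp
      rw [this, hh'M _ hxM, add_zero]
      calc (f n - h') (x n) ≤ ‖(f n - h') (x n)‖ := le_abs_self _
        _ ≤ ‖f n - h'‖ * ‖x n‖ := (f n - h').le_opNorm _
        _ ≤ ‖f n - h'‖ * 1 := mul_le_mul_of_nonneg_left (hx1 n) (norm_nonneg _)
        _ < 1/4 := by rw [mul_one]; rwa [← norm_neg, neg_sub] at hn
    have := hx2 n
    linarith
  -- M is separable
  have hsep : IsSeparable (M : Set X) := by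
    have : (M : Set X) ⊆ ⋃ n : ℕ, (Submodule.span ℝ (x '' Set.Iio n) : Set X) := by
      intro z hz
      classical
      obtain ⟨t, ht, hzt⟩ := Submodule.mem_span_finite_of_mem_span hz
      obtain ⟨k, hk⟩ : ∃ k : ℕ, ∀ w ∈ t, w ∈ x '' Set.Iio k := by
        have : ∀ w ∈ t, ∃ m : ℕ, x m = w := fun w hw => ht hw
        choose idx hidx using this
        refine ⟨(t.sup fun w => if hw : w ∈ t then idx w hw + 1 else 0) , fun w hw => ?_⟩
        · refine ⟨idx w hw, ?_, hidx w hw⟩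
          have : idx w hw + 1 ≤ t.sup fun w => if hw : w ∈ t then idx w hw + 1 else 0 := by
            have := Finset.le_sup (f := fun w => if hw : w ∈ t then idx w hw + 1 else 0) hw
            simpa [hw] using this
          simpa [Set.mem_Iio] using Nat.lt_of_succ_le this
      refine Set.mem_iUnion.2 ⟨k, ?_⟩
      exact Submodule.span_mono (fun w hw => hk w hw) hzt
    refine IsSeparable.mono (IsSeparable.iUnion fun n => ?_) this
    haveI : FiniteDimensional ℝ (Submodule.span ℝ (x '' Set.Iio n)) := by
      apply FiniteDimensional.span_of_finite
      exact (Set.finite_Iio n).image x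
    exact TopologicalSpace.IsSeparable.of_subtype _
  rw [← isSeparable_univ_iff]
  have := hsep.closure
  rwa [hdense.closure_eq] at this

open Filter Topology NormedSpace

set_option maxHeartbeats 1000000 in
set_option synthInstance.maxHeartbeats 200000 in
/-- Browder–Minty: A monotone, bounded, hemicontinuous, coercive
map `T` from a separable reflexive real Banach space `E` to its dual `E'` is
surjective; if moreover `T` is strictly monotone then `T` is bijective.
Reflexivity is encoded as surjectivity of the canonical inclusion of `E` into
its double dual. -/
theorem stmt17
    {E : Type*} [NormedAddCommGroup E] [NormedSpace ℝ E] [CompleteSpace E]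
    [TopologicalSpace.SeparableSpace E]
    (hrefl : Function.Surjective (inclusionInDoubleDual ℝ E))
    (T : E → StrongDual ℝ E)
    (hmono : ∀ w₁ w₂ : E, 0 ≤ (T w₁ - T w₂) (w₁ - w₂))
    (hbdd : ∀ s : Set E, Bornology.IsBounded s → Bornology.IsBounded (T '' s))
    (hhemi : ∀ w₁ w₂ : E, Continuous fun t : ℝ => (T (w₁ + t • w₂)) w₂)
    (hcoercive : ∀ M : ℝ, ∃ ρ : ℝ, ∀ w : E, ρ ≤ ‖w‖ → M ≤ (T w) w / ‖w‖) :
    Function.Surjective T ∧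
      ((∀ w₁ w₂ : E, w₁ ≠ w₂ → 0 < (T w₁ - T w₂) (w₁ - w₂)) →
        Function.Bijective T) := by
  classical
  have hsurj : Function.Surjective T := by
    intro L
    -- coercivity bound
    obtain ⟨ρ, hρ⟩ := hcoercive (‖L‖ + 1)
    set R : ℝ := max ρ 0 with hR
    have hcoerc : ∀ w : E, T w w ≤ ‖L‖ * ‖w‖ → ‖w‖ ≤ R := by
      intro w hw
      by_contra hcon
      push_neg at hcon
      have hwpos : 0 < ‖w‖ := lt_of_le_of_lt (le_max_right ρ 0) hcon
      have h1 := hρ w (le_of_lt (lt_of_le_of_lt (le_max_left ρ 0) hcon))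
      rw [le_div_iff₀ hwpos] at h1
      nlinarith
    have : Nonempty E := ⟨0⟩
    obtain ⟨d, hd⟩ := TopologicalSpace.exists_dense_seq E
    -- Galerkin solutions on the spans of initial segments
    have hsoln : ∀ n : ℕ, ∃ w : E,
        w ∈ Submodule.span ℝ (d '' Set.Iio n) ∧ ‖w‖ ≤ R ∧
          ∀ v ∈ Submodule.span ℝ (d '' Set.Iio n), T w v = L v := by
      intro n
      set Sp : Submodule ℝ E := Submodule.span ℝ (d '' Set.Iio n) with hSp
      haveI : FiniteDimensional ℝ Sp :=
        FiniteDimensional.span_of_finite ℝ ((Set.finite_Iio n).image d)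
      set m : ℕ := Module.finrank ℝ Sp with hm
      set b : Module.Basis (Fin m) ℝ Sp := Module.finBasis ℝ Sp with hb
      set e : Fin m → E := fun i => (b i : E) with he
      set Ψ : (Fin m → ℝ) ≃L[ℝ] Sp := b.equivFun.symm.toContinuousLinearEquiv with hΨ
      have hΨapp : ∀ c : Fin m → ℝ, ((Ψ c : Sp) : E) = ∑ j, c j • e j := by
        intro c
        have h1 : Ψ c = ∑ j, c j • b j := by
          rw [hΨ]
          rw [show (b.equivFun.symm.toContinuousLinearEquiv c : Sp)
              = b.equivFun.symm c from congrFun (b.equivFun.symm.coe_toContinuousLinearEquiv') c]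
          exact b.equivFun_symm_apply c
        rw [h1]
        push_cast
        simp [he]
      set K : ℝ := ‖(Ψ.symm : Sp →L[ℝ] (Fin m → ℝ))‖ with hK
      have hKbound : ∀ c : Fin m → ℝ, ‖c‖ ≤ K * ‖∑ j, c j • e j‖ := by
        intro c
        calc ‖c‖ = ‖Ψ.symm (Ψ c)‖ := by rw [ContinuousLinearEquiv.symm_apply_apply]
          _ ≤ K * ‖Ψ c‖ := (Ψ.symm : Sp →L[ℝ] (Fin m → ℝ)).le_opNorm _
          _ = K * ‖∑ j, c j • e j‖ := by
              congr 1
              rw [← hΨapp c]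
              rfl
      obtain ⟨w, hwmem, hwR, hwe⟩ := galerkin_solve T hmono hbdd hhemi L R hcoerc e K
        (by rw [hK]; exact norm_nonneg ((Ψ.symm : Sp →L[ℝ] (Fin m → ℝ)))) hKbound
      have hspan : Submodule.span ℝ (Set.range e) = Sp := by
        have h1 : Set.range e = (Sp.subtype) '' (Set.range b) := by
          rw [he]
          ext x
          simp [Set.range_comp]
        rw [h1, Submodule.span_image, b.span_eq, Submodule.map_subtype_top]
      refine ⟨w, by rwa [hspan] at hwmem, hwR, ?_⟩
      intro v hv
      rw [← hspan] at hv
      obtain ⟨c, hc⟩ := (Submodule.mem_span_range_iff_exists_fun ℝ).1 hv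
      rw [← hc, map_sum, map_sum]
      apply Finset.sum_congr rfl
      intro j _
      rw [map_smul, map_smul, hwe j]
    choose w hwmem hwR hwF using hsoln
    -- bound on T (w n)
    have hwball : ∀ n, w n ∈ Metric.closedBall (0:E) R := fun n =>
      mem_closedBall_zero_iff.2 (hwR n)
    obtain ⟨B, hB⟩ := isBounded_iff_forall_norm_le.1
      (hbdd _ (Metric.isBounded_closedBall (x := (0:E)) (r := R)))
    have hTB : ∀ n, ‖T (w n)‖ ≤ B := fun n => hB _ ⟨w n, hwball n, rfl⟩
    -- extract weak-* convergent subsequence of T (w n)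
    obtain ⟨ξ, ψ₁, hψ₁, hξ⟩ := seqAlaoglu (fun n => T (w n)) B hTB
    -- separability of the dual
    haveI : TopologicalSpace.SeparableSpace (StrongDual ℝ (StrongDual ℝ E)) :=
      hrefl.denseRange.separableSpace (inclusionInDoubleDual ℝ E).continuous
    haveI : TopologicalSpace.SeparableSpace (StrongDual ℝ E) := sep_of_dual_sep _
    -- extract weakly convergent subsequence of w
    have hJb : ∀ k, ‖inclusionInDoubleDual ℝ E (w (ψ₁ k))‖ ≤ R := fun k =>
      le_trans (double_dual_bound ℝ E _) (hwR _)
    obtain ⟨Φ, ψ₂, hψ₂, hΦ⟩ := seqAlaoglu (fun k => inclusionInDoubleDual ℝ E (w (ψ₁ k))) R hJb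
    obtain ⟨u, hu⟩ := hrefl Φ
    set σ : ℕ → ℕ := ψ₁ ∘ ψ₂ with hσ
    have hσmono : StrictMono σ := hψ₁.comp hψ₂
    have hweak : ∀ v : StrongDual ℝ E, Tendsto (fun k => v (w (σ k))) atTop (𝓝 (v u)) := by
      intro v
      have h1 := hΦ v
      rw [← hu] at h1
      simpa [NormedSpace.inclusionInDoubleDual, hσ] using h1
    have hξσ : ∀ x : E, Tendsto (fun k => T (w (σ k)) x) atTop (𝓝 (ξ x)) := fun x =>
      (hξ x).comp hψ₂.tendsto_atTop
    -- ξ = L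
    have hξL : ξ = L := by
      have hdd : ∀ i : ℕ, ξ (d i) = L (d i) := by
        intro i
        refine tendsto_nhds_unique (hξσ (d i)) ?_
        have hev : ∀ᶠ k in atTop, T (w (σ k)) (d i) = L (d i) := by
          filter_upwards [eventually_ge_atTop (i + 1)] with k hk
          have hik : i < σ k := lt_of_lt_of_le (Nat.lt_of_succ_le hk) (hσmono.le_apply)
          exact hwF (σ k) (d i) (Submodule.subset_span ⟨i, Set.mem_Iio.2 hik, rfl⟩)
        exact Tendsto.congr' (hev.mono fun k hk => hk.symm) tendsto_const_nhds
      have heq : (ξ : E → ℝ) = (L : E → ℝ) :=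
        Continuous.ext_on hd ξ.continuous L.continuous
          (by rintro x ⟨i, rfl⟩; exact hdd i)
      exact ContinuousLinearMap.ext fun x => congrFun heq x
    -- Minty's trick
    have hineq : ∀ v : E, 0 ≤ (L - T v) (u - v) := by
      intro v
      have hA : ∀ k, 0 ≤ L (w (σ k)) - T (w (σ k)) v - T v (w (σ k)) + T v v := by
        intro k
        have h1 := hmono (w (σ k)) v
        have h2 : (T (w (σ k)) - T v) (w (σ k) - v)
            = T (w (σ k)) (w (σ k)) - T (w (σ k)) v - T v (w (σ k)) + T v v := by
          simp only [ContinuousLinearMap.sub_apply, map_sub]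
          ring
        have h3 : T (w (σ k)) (w (σ k)) = L (w (σ k)) := hwF (σ k) _ (hwmem (σ k))
        rw [h2, h3] at h1
        exact h1
      have hlim : Tendsto (fun k => L (w (σ k)) - T (w (σ k)) v - T v (w (σ k)) + T v v)
          atTop (𝓝 (L u - ξ v - T v u + T v v)) :=
        (((hweak L).sub (hξσ v)).sub (hweak (T v))).add tendsto_const_nhds
      have h0 := ge_of_tendsto' hlim hA
      rw [hξL] at h0
      have : (L - T v) (u - v) = L u - L v - T v u + T v v := by
        simp only [ContinuousLinearMap.sub_apply, map_sub]
        ring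
      linarith [this ▸ h0]
    have hfinal : ∀ z : E, L z - T u z ≤ 0 := by
      intro z
      have hstep : ∀ t : ℝ, 0 < t → L z - T (u + t • z) z ≤ 0 := by
        intro t ht
        have h1 := hineq (u + t • z)
        have h2 : u - (u + t • z) = -(t • z) := by abel
        rw [h2] at h1
        have h3 : (L - T (u + t • z)) (-(t • z)) = -t * ((L - T (u + t • z)) z) := by
          rw [map_neg, map_smul]
          simp [smul_eq_mul]
        rw [h3] at h1
        have h4 : 0 ≤ (L - T (u + t • z)) z → False → True := fun _ _ => trivial
        have h5 : (L - T (u + t • z)) z ≤ 0 := by nlinarith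
        simpa [ContinuousLinearMap.sub_apply] using h5
      have hcont : Continuous fun t : ℝ => L z - T (u + t • z) z :=
        continuous_const.sub (hhemi u z)
      have htend : Tendsto (fun t : ℝ => L z - T (u + t • z) z) (𝓝[>] 0)
          (𝓝 (L z - T u z)) := by
        have h0 : L z - T (u + (0:ℝ) • z) z = L z - T u z := by simp
        have := (hcont.tendsto 0).mono_left (nhdsWithin_le_nhds (s := Set.Ioi (0:ℝ)))
        rwa [h0] at this
      exact le_of_tendsto htend (eventually_nhdsWithin_of_forall fun t ht => hstep t ht)
    refine ⟨u, ?_⟩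
    apply ContinuousLinearMap.ext
    intro z
    have h1 := hfinal z
    have h2 := hfinal (-z)
    rw [map_neg, map_neg] at h2
    linarith
  refine ⟨hsurj, fun hstrict => ⟨?_, hsurj⟩⟩
  intro a b hab
  by_contra hne
  have := hstrict a b hne
  rw [hab] at this
  simp at this
end
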